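/- Let C be a closed symmetric monoidal additive category with ℤ-indexed products and coproducts, with graded objects equipped with Day convolution. If a graded object M has only finitely many nonzero components, each of which is dualizable in C, then M is dualizable in graded objects, with dual N given by N_n = (M_{-n})^∨. -/

import Mathlib

open CategoryTheory Limits MonoidalCategory CategoryTheory.GradedObject

set_option linter.unusedSectionVars false


namespace GradedDualAux

variable {C : Type*} [Category C] [Preadditive C] [MonoidalCategory C]
    [HasZeroObject C] [HasInitial C]

noncomputable section

/-- Prune a discrete colimit cocone with all but two summands zero to a binary cofan. -/
def pruneCofan {J : Type*} {F : Discrete J ⥤ C} (c : Cocone F) (hc : IsColimit c)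
    (j₀ j₁ : J) (h01 : j₀ ≠ j₁)
    (hz : ∀ j : J, j ≠ j₀ → j ≠ j₁ → IsZero (F.obj ⟨j⟩)) :
    IsColimit (BinaryCofan.mk (c.ι.app ⟨j₀⟩) (c.ι.app ⟨j₁⟩)) := by
  classical
  refine BinaryCofan.isColimitMk
    (fun s => hc.desc (Cocone.mk s.pt (Discrete.natTrans (fun j =>
      if h : j.as = j₀ then eqToHom (by obtain ⟨a⟩ := j; cases h; rfl) ≫ s.inl
      else if h' : j.as = j₁ then eqToHom (by obtain ⟨a⟩ := j; cases h'; rfl) ≫ s.inr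
      else 0)))) ?_ ?_ ?_
  · intro s
    rw [hc.fac]
    simp
    exact Category.id_comp _
  · intro s
    rw [hc.fac]
    dsimp
    rw [dif_neg (fun h : j₁ = j₀ => h01 h.symm)]
    simp
    exact Category.id_comp _
  · intro s m h₁ h₂
    refine hc.hom_ext ?_
    rintro ⟨a⟩
    rw [hc.fac]
    by_cases h : a = j₀
    · subst h; simp; rw [h₁]; exact (Category.id_comp _).symm
    · by_cases h' : a = j₁
      · subst h'; simp [dif_neg h]; rw [h₂]; exact (Category.id_comp _).symm
      · simp only [dif_neg h, dif_neg h']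
        exact (hz a h h').eq_of_src _ _

lemma isZero_tensorLeft (X : C) {Z : C} (hZ : IsZero Z)
    [PreservesColimit (Functor.empty.{0} C) ((curriedTensor C).obj X)] :
    IsZero (X ⊗ Z) :=
  (IsInitial.isInitialObj ((curriedTensor C).obj X) Z hZ.isInitial).isZero

lemma isZero_tensorRight {Z : C} (Y : C) (hZ : IsZero Z)
    [PreservesColimit (Functor.empty.{0} C) ((curriedTensor C).flip.obj Y)] :
    IsZero (Z ⊗ Y) :=
  (IsInitial.isInitialObj ((curriedTensor C).flip.obj Y) Z hZ.isInitial).isZero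


section Additivity

variable [∀ (X₁ X₂ : GradedObject ℤ C), HasTensor X₁ X₂]
  [∀ (X₁ X₂ X₃ : GradedObject ℤ C), HasGoodTensor₁₂Tensor X₁ X₂ X₃]
  [∀ (X₁ X₂ X₃ : GradedObject ℤ C), HasGoodTensorTensor₂₃ X₁ X₂ X₃]
  [∀ X₁, PreservesColimit (Functor.empty.{0} C) ((curriedTensor C).obj X₁)]
  [∀ X₂, PreservesColimit (Functor.empty.{0} C) ((curriedTensor C).flip.obj X₂)]

/-- A graded object with `A` in degree `0` and `B` in degree 1. -/
def pairG (A B : C) : GradedObject ℤ C :=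
  fun q => if q = 0 then A else if q = 1 then B else ⊥_ C

/-- The constant graded object. -/
def constG (X : C) : GradedObject ℤ C := fun _ => X

@[simp] lemma pairG_zero (A B : C) : pairG A B 0 = A := rfl
@[simp] lemma pairG_one (A B : C) : pairG A B 1 = B := rfl
lemma pairG_ne (A B : C) {q : ℤ} (h0 : q ≠ 0) (h1 : q ≠ 1) : pairG A B q = ⊥_ C := by
  simp [pairG, h0, h1]

lemma presPairLeft (X A B : C) :
    HasColimit (pair A B) ∧ PreservesColimit (pair A B) ((curriedTensor C).obj X) := by
  classical
  set Y := ((mapBifunctor (curriedTensor C) ℤ ℤ).obj (constG (𝟙_ C))).obj (pairG A B) with hY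
  let pmap : ℤ × ℤ → ℤ := fun ⟨i, j⟩ => i + j
  haveI hm : Y.HasMap pmap := (inferInstance : HasTensor (constG (𝟙_ C)) (pairG A B))
  let c := Y.cofanMapObj pmap 0
  have hc : IsColimit c := Y.isColimitCofanMapObj pmap 0
  let j₀ : pmap ⁻¹' {0} := ⟨(0, 0), by simp [pmap]⟩
  let j₁ : pmap ⁻¹' {0} := ⟨(-1, 1), by simp [pmap]⟩
  have hne : j₀ ≠ j₁ := by
    intro h
    have := congrArg (fun x => x.1.1) h
    simp [j₀, j₁] at this
  have hzero : ∀ x : pmap ⁻¹' {0}, x ≠ j₀ → x ≠ j₁ → IsZero (Y x.1) := by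
    rintro ⟨⟨a, b⟩, hab⟩ h0 h1
    have hab' : a + b = 0 := hab
    have hb0 : b ≠ 0 := by
      rintro rfl
      refine h0 (Subtype.ext ?_)
      have : a = 0 := by omega
      simp [j₀, this]
    have hb1 : b ≠ 1 := by
      rintro rfl
      refine h1 (Subtype.ext ?_)
      have : a = -1 := by omega
      simp [j₁, this]
    have he : Y (a, b) = 𝟙_ C ⊗ (⊥_ C) := by
      show 𝟙_ C ⊗ pairG A B b = _
      rw [pairG_ne A B hb0 hb1]
    exact (he ▸ isZero_tensorLeft (𝟙_ C) (initialIsInitial.isZero) : IsZero (Y (a, b)))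
  have hbin : IsColimit (BinaryCofan.mk (c.ι.app ⟨j₀⟩) (c.ι.app ⟨j₁⟩)) :=
    pruneCofan c hc j₀ j₁ hne hzero
  let F := (curriedTensor C).obj X
  haveI hpres : PreservesColimit (Discrete.functor (Y.mapObjFun pmap 0)) F :=
    (inferInstance : HasGoodTensorTensor₂₃ (constG X) (constG (𝟙_ C)) (pairG A B)) 0 0
  have hcF : IsColimit (F.mapCocone c) := isColimitOfPreserves F hc
  have hbinF : IsColimit (BinaryCofan.mk (F.map (c.ι.app ⟨j₀⟩)) (F.map (c.ι.app ⟨j₁⟩))) :=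
    pruneCofan (F.mapCocone c) hcF j₀ j₁ hne
      (fun x hx0 hx1 => isZero_tensorLeft X (hzero x hx0 hx1))
  have h3 : IsColimit (F.mapCocone (BinaryCofan.mk (c.ι.app ⟨j₀⟩) (c.ι.app ⟨j₁⟩))) :=
    (isColimitMapCoconeBinaryCofanEquiv F _ _).symm hbinF
  haveI hp1 : PreservesColimit (pair (Y j₀.1) (Y j₁.1)) F :=
    preservesColimit_of_preserves_colimit_cocone hbin h3
  have eA : A ≅ Y j₀.1 := (λ_ A).symm
  have eB : B ≅ Y j₁.1 := (λ_ B).symm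
  constructor
  · haveI : HasColimit (pair (Y j₀.1) (Y j₁.1)) := HasColimit.mk ⟨_, hbin⟩
    exact hasColimit_of_iso (mapPairIso (F := pair A B) (G := pair (Y j₀.1) (Y j₁.1)) eA eB)
  · exact preservesColimit_of_iso_diagram F (mapPairIso (F := pair (Y j₀.1) (Y j₁.1)) (G := pair A B) eA.symm eB.symm)

lemma presPairRight (Y A B : C) :
    PreservesColimit (pair A B) ((curriedTensor C).flip.obj Y) := by
  classical
  set W := ((mapBifunctor (curriedTensor C) ℤ ℤ).obj (pairG A B)).obj (constG (𝟙_ C)) with hW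
  let pmap : ℤ × ℤ → ℤ := fun ⟨i, j⟩ => i + j
  haveI hm : W.HasMap pmap := (inferInstance : HasTensor (pairG A B) (constG (𝟙_ C)))
  let c := W.cofanMapObj pmap 0
  have hc : IsColimit c := W.isColimitCofanMapObj pmap 0
  let j₀ : pmap ⁻¹' {0} := ⟨(0, 0), by simp [pmap]⟩
  let j₁ : pmap ⁻¹' {0} := ⟨(1, -1), by simp [pmap]⟩
  have hne : j₀ ≠ j₁ := by
    intro h
    have := congrArg (fun x => x.1.1) h
    simp [j₀, j₁] at this
  have hzero : ∀ x : pmap ⁻¹' {0}, x ≠ j₀ → x ≠ j₁ → IsZero (W x.1) := by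
    rintro ⟨⟨a, b⟩, hab⟩ h0 h1
    have hab' : a + b = 0 := hab
    have ha0 : a ≠ 0 := by
      rintro rfl
      refine h0 (Subtype.ext ?_)
      have : b = 0 := by omega
      simp [j₀, this]
    have ha1 : a ≠ 1 := by
      rintro rfl
      refine h1 (Subtype.ext ?_)
      have : b = -1 := by omega
      simp [j₁, this]
    have he : W (a, b) = (⊥_ C) ⊗ 𝟙_ C := by
      show pairG A B a ⊗ 𝟙_ C = _
      rw [pairG_ne A B ha0 ha1]
    exact (he ▸ isZero_tensorRight (𝟙_ C) (initialIsInitial.isZero) : IsZero (W (a, b)))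
  have hbin : IsColimit (BinaryCofan.mk (c.ι.app ⟨j₀⟩) (c.ι.app ⟨j₁⟩)) :=
    pruneCofan c hc j₀ j₁ hne hzero
  let F := (curriedTensor C).flip.obj Y
  haveI hpres : PreservesColimit (Discrete.functor (W.mapObjFun pmap 0)) F :=
    (inferInstance : HasGoodTensor₁₂Tensor (pairG A B) (constG (𝟙_ C)) (constG Y)) 0 0
  have hcF : IsColimit (F.mapCocone c) := isColimitOfPreserves F hc
  have hbinF : IsColimit (BinaryCofan.mk (F.map (c.ι.app ⟨j₀⟩)) (F.map (c.ι.app ⟨j₁⟩))) :=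
    pruneCofan (F.mapCocone c) hcF j₀ j₁ hne
      (fun x hx0 hx1 => isZero_tensorRight Y (hzero x hx0 hx1))
  have h3 : IsColimit (F.mapCocone (BinaryCofan.mk (c.ι.app ⟨j₀⟩) (c.ι.app ⟨j₁⟩))) :=
    (isColimitMapCoconeBinaryCofanEquiv F _ _).symm hbinF
  haveI hp1 : PreservesColimit (pair (W j₀.1) (W j₁.1)) F :=
    preservesColimit_of_preserves_colimit_cocone hbin h3
  have eA : A ≅ W j₀.1 := (ρ_ A).symm
  have eB : B ≅ W j₁.1 := (ρ_ B).symm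
  exact preservesColimit_of_iso_diagram F
    (mapPairIso (F := pair (W j₀.1) (W j₁.1)) (G := pair A B) eA.symm eB.symm)

lemma hasBinaryCoproducts' : HasBinaryCoproducts C :=
  ⟨fun K => by
    have := (presPairLeft (C := C) (𝟙_ C) (K.obj ⟨WalkingPair.left⟩) (K.obj ⟨WalkingPair.right⟩)).1
    exact hasColimit_of_iso (diagramIsoPair K)⟩

lemma additive_tensorLeft (X : C) : ((curriedTensor C).obj X).Additive := by
  have hbc : HasBinaryCoproducts C := hasBinaryCoproducts'
  have : HasBinaryBiproducts C := HasBinaryBiproducts.of_hasBinaryCoproducts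
  have hshape : PreservesColimitsOfShape (Discrete WalkingPair) ((curriedTensor C).obj X) :=
    ⟨fun {K} => by
      have := (presPairLeft X (K.obj ⟨WalkingPair.left⟩) (K.obj ⟨WalkingPair.right⟩)).2
      exact preservesColimit_of_iso_diagram _ (diagramIsoPair K).symm⟩
  have : PreservesBinaryBiproducts ((curriedTensor C).obj X) :=
    preservesBinaryBiproducts_of_preservesBinaryCoproducts _
  exact Functor.additive_of_preservesBinaryBiproducts _

lemma additive_tensorRight (Y : C) : ((curriedTensor C).flip.obj Y).Additive := by
  have hbc : HasBinaryCoproducts C := hasBinaryCoproducts'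
  have : HasBinaryBiproducts C := HasBinaryBiproducts.of_hasBinaryCoproducts
  have hshape : PreservesColimitsOfShape (Discrete WalkingPair) ((curriedTensor C).flip.obj Y) :=
    ⟨fun {K} => by
      have := presPairRight Y (K.obj ⟨WalkingPair.left⟩) (K.obj ⟨WalkingPair.right⟩)
      exact preservesColimit_of_iso_diagram _ (diagramIsoPair K).symm⟩
  have : PreservesBinaryBiproducts ((curriedTensor C).flip.obj Y) :=
    preservesBinaryBiproducts_of_preservesBinaryCoproducts _
  exact Functor.additive_of_preservesBinaryBiproducts _

lemma wl_sum (X : C) {A B : C} {ι : Type*} (s : Finset ι) (f : ι → (A ⟶ B)) :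
    X ◁ (∑ i ∈ s, f i) = ∑ i ∈ s, X ◁ f i := by
  have := additive_tensorLeft (C := C) X
  have h := Functor.map_sum ((curriedTensor C).obj X) f s
  simpa using h

lemma wr_sum (Y : C) {A B : C} {ι : Type*} (s : Finset ι) (f : ι → (A ⟶ B)) :
    (∑ i ∈ s, f i) ▷ Y = ∑ i ∈ s, f i ▷ Y := by
  have := additive_tensorRight (C := C) Y
  have h := Functor.map_sum ((curriedTensor C).flip.obj Y) f s
  simpa using h

lemma wl_zero (X : C) {A B : C} : X ◁ (0 : A ⟶ B) = 0 := by
  have h := ((curriedTensor C).obj X).map_zero (X := A) (Y := B)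
  simpa using h

lemma wr_zero (Y : C) {A B : C} : (0 : A ⟶ B) ▷ Y = 0 := by
  have h := ((curriedTensor C).flip.obj Y).map_zero (X := A) (Y := B)
  simpa using h

end Additivity

section Main

variable [∀ (X₁ X₂ : GradedObject ℤ C), HasTensor X₁ X₂]
  [∀ (X₁ X₂ X₃ : GradedObject ℤ C), HasGoodTensor₁₂Tensor X₁ X₂ X₃]
  [∀ (X₁ X₂ X₃ : GradedObject ℤ C), HasGoodTensorTensor₂₃ X₁ X₂ X₃]
  [∀ X₁, PreservesColimit (Functor.empty.{0} C) ((curriedTensor C).obj X₁)]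
  [∀ X₂, PreservesColimit (Functor.empty.{0} C) ((curriedTensor C).flip.obj X₂)]

lemma isZero_rightDual (X : C) [HasRightDual X] (hX : IsZero X) : IsZero (Xᘁ) := by
  rw [IsZero.iff_id_eq_zero]
  have h1 : IsZero (X ⊗ Xᘁ) := isZero_tensorRight _ hX
  have h2 : IsZero ((Xᘁ : C) ⊗ (X ⊗ Xᘁ)) := isZero_tensorLeft _ h1
  have h4 := ExactPairing.coevaluation_evaluation X (Xᘁ)
  calc 𝟙 (Xᘁ : C) = (ρ_ (Xᘁ : C)).inv ≫ ((ρ_ (Xᘁ : C)).hom ≫ (λ_ (Xᘁ : C)).inv) ≫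
      (λ_ (Xᘁ : C)).hom := by simp
  _ = (ρ_ (Xᘁ : C)).inv ≫ ((Xᘁ : C) ◁ η_ X (Xᘁ) ≫ (α_ _ _ _).inv ≫ ε_ X (Xᘁ) ▷ (Xᘁ : C)) ≫
      (λ_ (Xᘁ : C)).hom := by rw [h4]
  _ = ((ρ_ (Xᘁ : C)).inv ≫ (Xᘁ : C) ◁ η_ X (Xᘁ)) ≫ ((α_ _ _ _).inv ≫
      ε_ X (Xᘁ) ▷ (Xᘁ : C) ≫ (λ_ (Xᘁ : C)).hom) := by simp only [Category.assoc]
  _ = 0 := by rw [h2.eq_of_tgt ((ρ_ (Xᘁ : C)).inv ≫ (Xᘁ : C) ◁ η_ X (Xᘁ)) 0, Limits.zero_comp]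

variable (M : GradedObject ℤ C) [∀ n : ℤ, HasRightDual (M n)]

/-- The candidate dual graded object. -/
abbrev Ndl : GradedObject ℤ C := fun n => (M (-n))ᘁ

variable (hfin : {n : ℤ | ¬ IsZero (M n)}.Finite)

/-- The negated support of `M`. -/
def sFin : Finset ℤ := hfin.toFinset.image (fun m => -m)

lemma mem_sFin {k : ℤ} : k ∈ sFin M hfin ↔ ¬ IsZero (M (-k)) := by
  constructor
  · intro hk
    obtain ⟨m, hm, rfl⟩ := Finset.mem_image.1 hk
    rw [neg_neg]
    exact (hfin.mem_toFinset).1 hm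
  · intro hk
    exact Finset.mem_image.2 ⟨-k, (hfin.mem_toFinset).2 hk, by omega⟩

/-- The coevaluation. -/
def coev : (Monoidal.tensorUnit : GradedObject ℤ C) ⟶ Monoidal.tensorObj M (Ndl M) :=
  fun j =>
    if hj : j = 0 then
      eqToHom (congrArg (Monoidal.tensorUnit : GradedObject ℤ C) hj) ≫
        Monoidal.tensorUnit₀.hom ≫
        (∑ k ∈ sFin M hfin, η_ (M (-k)) ((M (-k))ᘁ) ≫
          Monoidal.ιTensorObj M (Ndl M) (-k) k 0 (by omega)) ≫
        eqToHom (congrArg (Monoidal.tensorObj M (Ndl M)) hj.symm)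
    else 0

/-- The evaluation. -/
def ev : Monoidal.tensorObj (Ndl M) M ⟶ (Monoidal.tensorUnit : GradedObject ℤ C) :=
  fun j => Monoidal.tensorObjDesc (fun p q hpq =>
    if hj : j = 0 then
      ((M (-p))ᘁ ◁ eqToHom (congrArg M (show q = -p by omega))) ≫
        ε_ (M (-p)) ((M (-p))ᘁ) ≫ Monoidal.tensorUnit₀.inv ≫
        eqToHom (congrArg (Monoidal.tensorUnit : GradedObject ℤ C) hj.symm)
    else 0)

lemma coev_zero :
    coev M hfin 0 = Monoidal.tensorUnit₀.hom ≫
      (∑ k ∈ sFin M hfin, η_ (M (-k)) ((M (-k))ᘁ) ≫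
        Monoidal.ιTensorObj M (Ndl M) (-k) k 0 (by omega)) := by
  simp [coev]

lemma ι_ev_ne (p q j : ℤ) (hpq : p + q = j) (hj : j ≠ 0) :
    Monoidal.ιTensorObj (Ndl M) M p q j hpq ≫ ev M j = 0 := by
  simp [ev, hj]

lemma ι_ev_zero (p : ℤ) (h : p + -p = 0) :
    Monoidal.ιTensorObj (Ndl M) M p (-p) 0 h ≫ ev M 0 =
      ε_ (M (-p)) ((M (-p))ᘁ) ≫ Monoidal.tensorUnit₀.inv := by
  simp [ev]

lemma ι_rightUnitor_hom (X : GradedObject ℤ C) (p : ℤ) (h : p + 0 = p) :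
    Monoidal.ιTensorObj X Monoidal.tensorUnit p 0 p h ≫ (Monoidal.rightUnitor X).hom p =
      (X p ◁ Monoidal.tensorUnit₀.hom) ≫ (ρ_ (X p)).hom := by
  have hinv := Monoidal.rightUnitor_inv_apply X p
  have hid : (Monoidal.rightUnitor X).inv p ≫ (Monoidal.rightUnitor X).hom p = 𝟙 _ := by
    rw [← GradedObject.categoryOfGradedObjects_comp, Iso.inv_hom_id,
      GradedObject.categoryOfGradedObjects_id]
  have hι : Monoidal.ιTensorObj X Monoidal.tensorUnit p 0 p h =
      (X p ◁ Monoidal.tensorUnit₀.hom) ≫ (ρ_ (X p)).hom ≫ (Monoidal.rightUnitor X).inv p := by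
    rw [hinv]
    simp only [Iso.hom_inv_id_assoc]
    rw [← MonoidalCategory.whiskerLeft_comp_assoc, Iso.hom_inv_id,
      MonoidalCategory.whiskerLeft_id, Category.id_comp]
  rw [hι, Category.assoc, Category.assoc, hid, Category.comp_id]

lemma ι_leftUnitor_hom (X : GradedObject ℤ C) (p : ℤ) (h : 0 + p = p) :
    Monoidal.ιTensorObj Monoidal.tensorUnit X 0 p p h ≫ (Monoidal.leftUnitor X).hom p =
      (Monoidal.tensorUnit₀.hom ▷ X p) ≫ (λ_ (X p)).hom := by
  have hinv := Monoidal.leftUnitor_inv_apply X p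
  have hid : (Monoidal.leftUnitor X).inv p ≫ (Monoidal.leftUnitor X).hom p = 𝟙 _ := by
    rw [← GradedObject.categoryOfGradedObjects_comp, Iso.inv_hom_id,
      GradedObject.categoryOfGradedObjects_id]
  have hι : Monoidal.ιTensorObj Monoidal.tensorUnit X 0 p p h =
      (Monoidal.tensorUnit₀.hom ▷ X p) ≫ (λ_ (X p)).hom ≫ (Monoidal.leftUnitor X).inv p := by
    rw [hinv]
    simp only [Iso.hom_inv_id_assoc]
    rw [← MonoidalCategory.comp_whiskerRight_assoc, Iso.hom_inv_id,
      MonoidalCategory.id_whiskerRight, Category.id_comp]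
  rw [hι, Category.assoc, Category.assoc, hid, Category.comp_id]

lemma eq1 :
    Monoidal.tensorHom (𝟙 (Ndl M)) (coev M hfin) ≫ (Monoidal.associator (Ndl M) M (Ndl M)).inv ≫
      Monoidal.tensorHom (ev M) (𝟙 (Ndl M)) =
    (Monoidal.rightUnitor (Ndl M)).hom ≫ (Monoidal.leftUnitor (Ndl M)).inv := by
  funext j
  apply Monoidal.tensorObj_ext
  intro p q hpq
  by_cases hq : q = 0
  · subst hq
    obtain rfl : j = p := by omega
    simp only [GradedObject.categoryOfGradedObjects_comp]
    rw [Monoidal.ι_tensorHom_assoc]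
    simp only [GradedObject.categoryOfGradedObjects_id, coev_zero,
      MonoidalCategory.id_tensorHom, MonoidalCategory.whiskerLeft_comp, Category.assoc,
      wl_sum, Preadditive.sum_comp, Preadditive.comp_sum]
    have hterm : ∀ (k : ℤ) (h₀ : -k + k = 0) (i₁₂ : ℤ) (h₁₂ : j + -k = i₁₂) (h₂ : i₁₂ + k = j),
        Ndl M j ◁ η_ (M (-k)) ((M (-k))ᘁ) ≫
          Ndl M j ◁ Monoidal.ιTensorObj M (Ndl M) (-k) k 0 h₀ ≫
          Monoidal.ιTensorObj (Ndl M) (Monoidal.tensorObj M (Ndl M)) j 0 j hpq ≫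
          (Monoidal.associator (Ndl M) M (Ndl M)).inv j ≫
          Monoidal.tensorHom (ev M) (𝟙 (Ndl M)) j
        = (Ndl M j ◁ η_ (M (-k)) ((M (-k))ᘁ)) ≫ (α_ (Ndl M j) (M (-k)) (Ndl M k)).inv ≫
          ((Monoidal.ιTensorObj (Ndl M) M j (-k) i₁₂ h₁₂ ≫ ev M i₁₂) ▷ Ndl M k) ≫
          Monoidal.ιTensorObj Monoidal.tensorUnit (Ndl M) i₁₂ k j h₂ := by
      intro k h₀ i₁₂ h₁₂ h₂
      rw [← Monoidal.ιTensorObj₃_eq_assoc (Ndl M) M (Ndl M) j (-k) k j (by omega) 0 h₀,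
        Monoidal.ιTensorObj₃_associator_inv_assoc,
        Monoidal.ιTensorObj₃'_eq_assoc (Ndl M) M (Ndl M) j (-k) k j (by omega) i₁₂ h₁₂,
        Monoidal.ι_tensorHom]
      simp only [GradedObject.categoryOfGradedObjects_id, MonoidalCategory.tensorHom_id,
        Category.assoc, ← MonoidalCategory.comp_whiskerRight_assoc]
    by_cases hj : j ∈ sFin M hfin
    · rw [Finset.sum_eq_single_of_mem j hj (fun b _ hb => by
        rw [hterm b (by omega) (j + -b) rfl (by omega),
          ι_ev_ne M j (-b) (j + -b) rfl (by omega), wr_zero]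
        simp)]
      rw [hterm j (by omega) 0 (by omega) (by omega), ι_ev_zero M j (by omega),
        MonoidalCategory.comp_whiskerRight]
      conv_rhs => rw [← Category.assoc, ι_rightUnitor_hom (Ndl M) j hpq,
        Monoidal.leftUnitor_inv_apply]
      slice_lhs 2 4 => rw [ExactPairing.coevaluation_evaluation]
      simp
    · have hzN : IsZero (Ndl M j) :=
        isZero_rightDual (M (-j)) (by by_contra h; exact hj ((mem_sFin M hfin).2 h))
      rw [Finset.sum_eq_zero (fun b hb => by
        have hbj : b ≠ j := fun h => hj (h ▸ hb)
        rw [hterm b (by omega) (j + -b) rfl (by omega),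
          ι_ev_ne M j (-b) (j + -b) rfl (by omega), wr_zero]
        simp)]
      have h0 : Monoidal.ιTensorObj (Ndl M) Monoidal.tensorUnit j 0 j hpq ≫
          (Monoidal.rightUnitor (Ndl M)).hom j = 0 := hzN.eq_of_tgt _ _
      rw [← Category.assoc, h0, Limits.zero_comp]
  · exact (isZero_tensorLeft (Ndl M p)
      ((Monoidal.isInitialTensorUnitApply q hq).isZero)).eq_of_src _ _

lemma mem_sFin' {k : ℤ} : -k ∈ sFin M hfin ↔ ¬ IsZero (M k) := by
  rw [mem_sFin, neg_neg]

lemma eq2 :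
    Monoidal.tensorHom (coev M hfin) (𝟙 M) ≫ (Monoidal.associator M (Ndl M) M).hom ≫
      Monoidal.tensorHom (𝟙 M) (ev M) =
    (Monoidal.leftUnitor M).hom ≫ (Monoidal.rightUnitor M).inv := by
  funext j
  apply Monoidal.tensorObj_ext
  intro q p hpq
  by_cases hq : q = 0
  · subst hq
    obtain rfl : j = p := by omega
    simp only [GradedObject.categoryOfGradedObjects_comp]
    rw [Monoidal.ι_tensorHom_assoc]
    simp only [GradedObject.categoryOfGradedObjects_id, coev_zero,
      MonoidalCategory.tensorHom_id, MonoidalCategory.comp_whiskerRight, Category.assoc,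
      wr_sum, Preadditive.sum_comp, Preadditive.comp_sum]
    have hterm2 : ∀ (k : ℤ) (h₀ : -k + k = 0) (i₂₃ : ℤ) (h₂₃ : k + j = i₂₃) (h₂ : -k + i₂₃ = j),
        (η_ (M (-k)) ((M (-k))ᘁ) ▷ M j) ≫
          (Monoidal.ιTensorObj M (Ndl M) (-k) k 0 h₀ ▷ M j) ≫
          Monoidal.ιTensorObj (Monoidal.tensorObj M (Ndl M)) M 0 j j hpq ≫
          (Monoidal.associator M (Ndl M) M).hom j ≫
          Monoidal.tensorHom (𝟙 M) (ev M) j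
        = (η_ (M (-k)) ((M (-k))ᘁ) ▷ M j) ≫ (α_ (M (-k)) (Ndl M k) (M j)).hom ≫
          (M (-k) ◁ (Monoidal.ιTensorObj (Ndl M) M k j i₂₃ h₂₃ ≫ ev M i₂₃)) ≫
          Monoidal.ιTensorObj M Monoidal.tensorUnit (-k) i₂₃ j h₂ := by
      intro k h₀ i₂₃ h₂₃ h₂
      rw [← Monoidal.ιTensorObj₃'_eq_assoc M (Ndl M) M (-k) k j j (by omega) 0 h₀,
        Monoidal.ιTensorObj₃'_associator_hom_assoc,
        Monoidal.ιTensorObj₃_eq_assoc M (Ndl M) M (-k) k j j (by omega) i₂₃ h₂₃,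
        Monoidal.ι_tensorHom]
      simp only [GradedObject.categoryOfGradedObjects_id, MonoidalCategory.id_tensorHom,
        Category.assoc, ← MonoidalCategory.whiskerLeft_comp_assoc]
    by_cases hj : IsZero (M j)
    · rw [Finset.sum_eq_zero (fun b hb => by
        have hbj : b ≠ -j := by
          rintro rfl
          exact ((mem_sFin' M hfin).1 hb) hj
        rw [hterm2 b (by omega) (b + j) rfl (by omega),
          ι_ev_ne M b j (b + j) rfl (by omega), wl_zero]
        simp)]
      have h0 : Monoidal.ιTensorObj Monoidal.tensorUnit M 0 j j hpq ≫
          (Monoidal.leftUnitor M).hom j = 0 := hj.eq_of_tgt _ _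
      rw [← Category.assoc, h0, Limits.zero_comp]
    · rw [Finset.sum_eq_single_of_mem (-j) ((mem_sFin' M hfin).2 hj) (fun b hb hbj => by
        rw [hterm2 b (by omega) (b + j) rfl (by omega),
          ι_ev_ne M b j (b + j) rfl (by omega), wl_zero]
        simp),
        hterm2 (-j) (by omega) 0 (by omega) (by omega)]
      have key : ∀ (k : ℤ) (hk : -k = j) (hx : k + j = 0) (h5 : -k + 0 = j),
          (Monoidal.tensorUnit₀.hom ▷ M j) ≫ (η_ (M (-k)) ((M (-k))ᘁ) ▷ M j) ≫
            (α_ (M (-k)) (Ndl M k) (M j)).hom ≫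
            (M (-k) ◁ (Monoidal.ιTensorObj (Ndl M) M k j 0 hx ≫ ev M 0)) ≫
            Monoidal.ιTensorObj M Monoidal.tensorUnit (-k) 0 j h5
          = Monoidal.ιTensorObj Monoidal.tensorUnit M 0 j j hpq ≫
            (Monoidal.leftUnitor M).hom j ≫ (Monoidal.rightUnitor M).inv j := by
        intro k hk hx h5
        subst hk
        rw [ι_ev_zero M k hx, MonoidalCategory.whiskerLeft_comp]
        conv_rhs => rw [← Category.assoc, ι_leftUnitor_hom M (-k) hpq,
          Monoidal.rightUnitor_inv_apply]
        slice_lhs 2 4 => rw [ExactPairing.evaluation_coevaluation]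
        simp
      exact key (-j) (by omega) (by omega) (by omega)
  · exact (isZero_tensorRight (M p)
      ((Monoidal.isInitialTensorUnitApply q hq).isZero)).eq_of_src _ _

end Main
end
end GradedDualAux


/-- let `C` be a (closed symmetric) monoidal additive category with
`ℤ`-indexed products and coproducts, and equip `ℤ`-graded objects with the Day
convolution monoidal structure `(X ⊗ Y)ₙ = ⨁_{p+q=n} Xₚ ⊗ Y_q`.  If a graded object
`M` has only finitely many nonzero components, each of which is dualizable in `C`
(witnessed by a choice of right duals), then `M` is dualizable in graded objects,
with dual `N` given by `Nₙ = (M₋ₙ)ᘁ` (i.e. there is an exact pairing between `M` and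
`N`). -/
theorem gradedObject_dualizable_of_finite_support
    {C : Type*} [Category C] [Preadditive C] [MonoidalCategory C]
    [HasZeroObject C]
    [∀ (X₁ X₂ : GradedObject ℤ C), HasTensor X₁ X₂]
    [∀ (X₁ X₂ X₃ : GradedObject ℤ C), HasGoodTensor₁₂Tensor X₁ X₂ X₃]
    [∀ (X₁ X₂ X₃ : GradedObject ℤ C), HasGoodTensorTensor₂₃ X₁ X₂ X₃]
    [HasInitial C]
    [∀ X₁, PreservesColimit (Functor.empty.{0} C) ((curriedTensor C).obj X₁)]
    [∀ X₂, PreservesColimit (Functor.empty.{0} C) ((curriedTensor C).flip.obj X₂)]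
    [∀ (X₁ X₂ X₃ X₄ : GradedObject ℤ C), HasTensor₄ObjExt X₁ X₂ X₃ X₄]
    (M : GradedObject ℤ C)
    (hfin : {n : ℤ | ¬ IsZero (M n)}.Finite)
    [∀ n : ℤ, HasRightDual (M n)] :
    ∃ N : GradedObject ℤ C,
      (∀ n : ℤ, Nonempty (N n ≅ (M (-n))ᘁ)) ∧ Nonempty (ExactPairing M N) := by
  classical
  exact ⟨GradedDualAux.Ndl M, fun n => ⟨Iso.refl _⟩,
    ⟨⟨GradedDualAux.coev M hfin, GradedDualAux.ev M,
      GradedDualAux.eq1 M hfin, GradedDualAux.eq2 M hfin⟩⟩⟩
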